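/- Let V ⊂ P^7 be the cone over the sextic Del Pezzo surface S_6 ⊂ P^6 = {y = 0} with vertex v = [0:...:0:1], and t the involution [x_0:...:x_6:y] ↦ [x_2:x_4:x_0:x_5:x_1:x_3:x_6:-y]. Then the fixed locus of t|_V consists of exactly five points: v and the four points [±1:±1:±1:±1:±1:±1:1:0] given by v_1=[1:1:1:1:1:1:1:0], v_2=[1:-1:1:-1:-1:-1:1:0], v_3=[-1:1:-1:-1:1:-1:1:0], v_4=[-1:-1:-1:1:-1:1:1:0]. -/
import Mathlib


/-- The involution `t : [x₀:…:x₆:y] ↦ [x₂:x₄:x₀:x₅:x₁:x₃:x₆:-y]` of ℙ⁷. -/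
def tmap (x : Fin 8 → ℂ) : Fin 8 → ℂ :=
  ![x 2, x 4, x 0, x 5, x 1, x 3, x 6, -(x 7)]

/-- The cone `V ⊂ ℙ⁷` over the sextic Del Pezzo surface, cut out by nine quadrics. -/
def onV (x : Fin 8 → ℂ) : Prop :=
  x 3 * x 5 = x 6 ^ 2 ∧ x 2 * x 5 = x 4 * x 6 ∧ x 1 * x 5 = x 0 * x 6 ∧
  x 3 * x 4 = x 2 * x 6 ∧ x 1 * x 4 = x 6 ^ 2 ∧ x 0 * x 4 = x 5 * x 6 ∧
  x 0 * x 3 = x 1 * x 6 ∧ x 1 * x 2 = x 3 * x 6 ∧ x 0 * x 2 = x 6 ^ 2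

def vtx : Fin 8 → ℂ := ![0, 0, 0, 0, 0, 0, 0, 1]
def v1 : Fin 8 → ℂ := ![1, 1, 1, 1, 1, 1, 1, 0]
def v2 : Fin 8 → ℂ := ![1, -1, 1, -1, -1, -1, 1, 0]
def v3 : Fin 8 → ℂ := ![-1, 1, -1, -1, 1, -1, 1, 0]
def v4 : Fin 8 → ℂ := ![-1, -1, -1, 1, -1, 1, 1, 0]

/-- The fixed locus of `t|_V` consists of exactly the five points
`v, v₁, v₂, v₃, v₄` of ℙ⁷ (in homogeneous coordinates: a nonzero point of `V`
is fixed iff it is a nonzero scalar multiple of one of them). -/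
theorem stmt15 (x : Fin 8 → ℂ) (hx : x ≠ 0) (hV : onV x) :
    (∃ c : ℂ, c ≠ 0 ∧ tmap x = c • x) ↔
      ∃ d : ℂ, d ≠ 0 ∧
        (x = d • vtx ∨ x = d • v1 ∨ x = d • v2 ∨ x = d • v3 ∨ x = d • v4) := by
  obtain ⟨q1, q2, q3, q4, q5, q6, q7, q8, q9⟩ := hV
  constructor
  · rintro ⟨c, hc, ht⟩
    have e0 : x 2 = c * x 0 := by simpa [tmap] using congrFun ht 0
    have e1 : x 4 = c * x 1 := by simpa [tmap] using congrFun ht 1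
    have e3 : x 5 = c * x 3 := by simpa [tmap] using congrFun ht 3
    have e6 : x 6 = c * x 6 := by simpa [tmap] using congrFun ht 6
    have e7 : -(x 7) = c * x 7 := by simpa [tmap] using congrFun ht 7
    by_cases h6 : x 6 = 0
    · have h0 : x 0 = 0 := by
        have h : c * x 0 ^ 2 = 0 := by rw [h6] at q9; linear_combination q9 - x 0 * e0
        rcases mul_eq_zero.mp h with h | h
        · exact absurd h hc
        · exact pow_eq_zero_iff (n := 2) (by norm_num) |>.mp h
      have h1 : x 1 = 0 := by
        have h : c * x 1 ^ 2 = 0 := by rw [h6] at q5; linear_combination q5 - x 1 * e1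
        rcases mul_eq_zero.mp h with h | h
        · exact absurd h hc
        · exact pow_eq_zero_iff (n := 2) (by norm_num) |>.mp h
      have h3 : x 3 = 0 := by
        have h : c * x 3 ^ 2 = 0 := by rw [h6] at q1; linear_combination q1 - x 3 * e3
        rcases mul_eq_zero.mp h with h | h
        · exact absurd h hc
        · exact pow_eq_zero_iff (n := 2) (by norm_num) |>.mp h
      have h2 : x 2 = 0 := by rw [e0, h0, mul_zero]
      have h4 : x 4 = 0 := by rw [e1, h1, mul_zero]
      have h5 : x 5 = 0 := by rw [e3, h3, mul_zero]
      have h7 : x 7 ≠ 0 := by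
        intro h7
        apply hx
        funext i
        fin_cases i <;> assumption
      refine ⟨x 7, h7, Or.inl ?_⟩
      funext i
      fin_cases i
      · show x 0 = x 7 * 0; rw [h0, mul_zero]
      · show x 1 = x 7 * 0; rw [h1, mul_zero]
      · show x 2 = x 7 * 0; rw [h2, mul_zero]
      · show x 3 = x 7 * 0; rw [h3, mul_zero]
      · show x 4 = x 7 * 0; rw [h4, mul_zero]
      · show x 5 = x 7 * 0; rw [h5, mul_zero]
      · show x 6 = x 7 * 0; rw [h6, mul_zero]
      · show x 7 = x 7 * 1; rw [mul_one]
    · have hc1 : c = 1 := by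
        have h : (c - 1) * x 6 = 0 := by linear_combination -e6
        rcases mul_eq_zero.mp h with h | h
        · exact sub_eq_zero.mp h
        · exact absurd h h6
      subst hc1
      have h7 : x 7 = 0 := by
        have h : (2 : ℂ) * x 7 = 0 := by linear_combination -e7
        rcases mul_eq_zero.mp h with h | h
        · norm_num at h
        · exact h
      rw [one_mul] at e0 e1 e3
      have s0 : (x 0 - x 6) * (x 0 + x 6) = 0 := by
        linear_combination q9 - x 0 * e0
      have s1 : (x 1 - x 6) * (x 1 + x 6) = 0 := by
        linear_combination q5 - x 1 * e1
      have s3 : x 3 * x 6 = x 0 * x 1 := by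
        linear_combination x 1 * e0 - q8
      rcases mul_eq_zero.mp s0 with p0 | p0 <;> rcases mul_eq_zero.mp s1 with p1 | p1
      · have p0 : x 0 = x 6 := sub_eq_zero.mp p0
        have p1 : x 1 = x 6 := sub_eq_zero.mp p1
        have p3 : x 3 = x 6 := by
          have h := mul_right_cancel₀ h6 (show x 3 * x 6 = x 6 * x 6 by rw [s3, p0, p1]; try ring)
          exact h
        refine ⟨x 6, h6, Or.inr (Or.inl ?_)⟩
        funext i
        fin_cases i
        · show x 0 = x 6 * (1); linear_combination p0
        · show x 1 = x 6 * (1); linear_combination p1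
        · show x 2 = x 6 * (1); linear_combination e0 + p0
        · show x 3 = x 6 * (1); linear_combination p3
        · show x 4 = x 6 * (1); linear_combination e1 + p1
        · show x 5 = x 6 * (1); linear_combination e3 + p3
        · show x 6 = x 6 * (1); ring
        · show x 7 = x 6 * (0); linear_combination h7
      · have p0 : x 0 = x 6 := sub_eq_zero.mp p0
        have p1 : x 1 = -x 6 := eq_neg_of_add_eq_zero_left p1
        have p3 : x 3 = -x 6 := by
          have h := mul_right_cancel₀ h6 (show x 3 * x 6 = -x 6 * x 6 by rw [s3, p0, p1]; try ring)
          exact h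
        refine ⟨x 6, h6, Or.inr (Or.inr (Or.inl ?_))⟩
        funext i
        fin_cases i
        · show x 0 = x 6 * (1); linear_combination p0
        · show x 1 = x 6 * (-1); linear_combination p1
        · show x 2 = x 6 * (1); linear_combination e0 + p0
        · show x 3 = x 6 * (-1); linear_combination p3
        · show x 4 = x 6 * (-1); linear_combination e1 + p1
        · show x 5 = x 6 * (-1); linear_combination e3 + p3
        · show x 6 = x 6 * (1); ring
        · show x 7 = x 6 * (0); linear_combination h7
      · have p0 : x 0 = -x 6 := eq_neg_of_add_eq_zero_left p0
        have p1 : x 1 = x 6 := sub_eq_zero.mp p1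
        have p3 : x 3 = -x 6 := by
          have h := mul_right_cancel₀ h6 (show x 3 * x 6 = -x 6 * x 6 by rw [s3, p0, p1]; try ring)
          exact h
        refine ⟨x 6, h6, Or.inr (Or.inr (Or.inr (Or.inl ?_)))⟩
        funext i
        fin_cases i
        · show x 0 = x 6 * (-1); linear_combination p0
        · show x 1 = x 6 * (1); linear_combination p1
        · show x 2 = x 6 * (-1); linear_combination e0 + p0
        · show x 3 = x 6 * (-1); linear_combination p3
        · show x 4 = x 6 * (1); linear_combination e1 + p1
        · show x 5 = x 6 * (-1); linear_combination e3 + p3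
        · show x 6 = x 6 * (1); ring
        · show x 7 = x 6 * (0); linear_combination h7
      · have p0 : x 0 = -x 6 := eq_neg_of_add_eq_zero_left p0
        have p1 : x 1 = -x 6 := eq_neg_of_add_eq_zero_left p1
        have p3 : x 3 = x 6 := by
          have h := mul_right_cancel₀ h6 (show x 3 * x 6 = x 6 * x 6 by rw [s3, p0, p1]; try ring)
          exact h
        refine ⟨x 6, h6, Or.inr (Or.inr (Or.inr (Or.inr ?_)))⟩
        funext i
        fin_cases i
        · show x 0 = x 6 * (-1); linear_combination p0
        · show x 1 = x 6 * (-1); linear_combination p1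
        · show x 2 = x 6 * (-1); linear_combination e0 + p0
        · show x 3 = x 6 * (1); linear_combination p3
        · show x 4 = x 6 * (-1); linear_combination e1 + p1
        · show x 5 = x 6 * (1); linear_combination e3 + p3
        · show x 6 = x 6 * (1); ring
        · show x 7 = x 6 * (0); linear_combination h7
  · rintro ⟨d, hd, h | h | h | h | h⟩ <;> subst h
    · refine ⟨-1, by norm_num, ?_⟩
      funext i
      fin_cases i
      · show d * (0:ℂ) = -1 * (d * 0); ring
      · show d * (0:ℂ) = -1 * (d * 0); ring
      · show d * (0:ℂ) = -1 * (d * 0); ring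
      · show d * (0:ℂ) = -1 * (d * 0); ring
      · show d * (0:ℂ) = -1 * (d * 0); ring
      · show d * (0:ℂ) = -1 * (d * 0); ring
      · show d * (0:ℂ) = -1 * (d * 0); ring
      · show -(d * (1:ℂ)) = -1 * (d * 1); ring
    · refine ⟨1, one_ne_zero, ?_⟩
      funext i
      fin_cases i
      · show d * (1) = 1 * (d * (1)); ring
      · show d * (1) = 1 * (d * (1)); ring
      · show d * (1) = 1 * (d * (1)); ring
      · show d * (1) = 1 * (d * (1)); ring
      · show d * (1) = 1 * (d * (1)); ring
      · show d * (1) = 1 * (d * (1)); ring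
      · show d * (1) = 1 * (d * (1)); ring
      · show -(d * (0:ℂ)) = 1 * (d * 0); ring
    · refine ⟨1, one_ne_zero, ?_⟩
      funext i
      fin_cases i
      · show d * (1) = 1 * (d * (1)); ring
      · show d * (-1) = 1 * (d * (-1)); ring
      · show d * (1) = 1 * (d * (1)); ring
      · show d * (-1) = 1 * (d * (-1)); ring
      · show d * (-1) = 1 * (d * (-1)); ring
      · show d * (-1) = 1 * (d * (-1)); ring
      · show d * (1) = 1 * (d * (1)); ring
      · show -(d * (0:ℂ)) = 1 * (d * 0); ring
    · refine ⟨1, one_ne_zero, ?_⟩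
      funext i
      fin_cases i
      · show d * (-1) = 1 * (d * (-1)); ring
      · show d * (1) = 1 * (d * (1)); ring
      · show d * (-1) = 1 * (d * (-1)); ring
      · show d * (-1) = 1 * (d * (-1)); ring
      · show d * (1) = 1 * (d * (1)); ring
      · show d * (-1) = 1 * (d * (-1)); ring
      · show d * (1) = 1 * (d * (1)); ring
      · show -(d * (0:ℂ)) = 1 * (d * 0); ring
    · refine ⟨1, one_ne_zero, ?_⟩
      funext i
      fin_cases i
      · show d * (-1) = 1 * (d * (-1)); ring
      · show d * (-1) = 1 * (d * (-1)); ring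
      · show d * (-1) = 1 * (d * (-1)); ring
      · show d * (1) = 1 * (d * (1)); ring
      · show d * (-1) = 1 * (d * (-1)); ring
      · show d * (1) = 1 * (d * (1)); ring
      · show d * (1) = 1 * (d * (1)); ring
      · show -(d * (0:ℂ)) = 1 * (d * 0); ring
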